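/- (Vaughan's identity for number fields.) Let 𝔫 be a nonzero ideal of 𝒪_K and let U, V ≥ 1 be reals with U < 𝒩(𝔫). Then Λ(𝔫) = a₁(𝔫) + a₂(𝔫) + a₃(𝔫), where a₁(𝔫) := −∑ μ(𝔪)Λ(𝔩), the sum over all ordered triples (𝔯,𝔪,𝔩) of nonzero ideals with 𝔯𝔪𝔩 = 𝔫, 𝒩(𝔪) ≤ V and 𝒩(𝔩) ≤ U; a₂(𝔫) := ∑ μ(𝔩)·log 𝒩(𝔯), the sum over all ordered pairs (𝔩,𝔯) with 𝔩𝔯 = 𝔫 and 𝒩(𝔩) ≤ V; and a₃(𝔫) := −∑ Λ(𝔪)·(∑_{𝔡 | 𝔯, 𝒩(𝔡) ≤ V} μ(𝔡)), the outer sum over all ordered pairs (𝔪,𝔯) with 𝔪𝔯 = 𝔫, 𝒩(𝔪) > U and 𝒩(𝔯) > 1. -/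

import Mathlib

open NumberField Ideal

noncomputable section
open scoped Classical

/-- The von Mangoldt function on ideals of `𝒪_K`. -/
def IdealLambda (K : Type) [Field K] [NumberField K] (𝔞 : Ideal (𝓞 K)) : ℝ :=
  if ∃ (𝔭 : Ideal (𝓞 K)) (k : ℕ), 𝔭.IsPrime ∧ 𝔭 ≠ ⊥ ∧ 0 < k ∧ 𝔞 = 𝔭 ^ k
  then Real.log (Ideal.absNorm 𝔞.radical) else 0

/-- The Möbius function on ideals of `𝒪_K`: `(-1)^k` on a squarefree product of `k`
prime ideals, and `0` otherwise. -/
def IdealMoebius (K : Type) [Field K] [NumberField K] (𝔞 : Ideal (𝓞 K)) : ℤ :=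
  if Squarefree 𝔞 then (-1) ^ (UniqueFactorizationMonoid.factors 𝔞).card else 0

namespace Vaughan

variable {K : Type} [Field K] [NumberField K]

lemma finite_div (n : Ideal (𝓞 K)) (hn : n ≠ 0) : {d : Ideal (𝓞 K) | d ∣ n}.Finite := by
  haveI : Fintype {d : Ideal (𝓞 K) // d ∣ n} :=
    UniqueFactorizationMonoid.fintypeSubtypeDvd n hn
  have h : Finite {d : Ideal (𝓞 K) // d ∣ n} := Finite.of_fintype _
  exact Set.finite_coe_iff.mp h

lemma tsum_finset {α : Type*} {s : Set α} (hs : s.Finite) (f : α → ℝ) :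
    ∑' x : s, f x = ∑ x ∈ hs.toFinset, f x := by
  rw [tsum_subtype]
  rw [tsum_eq_sum (s := hs.toFinset)
      (f := s.indicator f) (fun b hb => Set.indicator_of_notMem
        (fun h => hb (hs.mem_toFinset.mpr h)) f)]
  exact Finset.sum_congr rfl fun x hx => Set.indicator_of_mem (hs.mem_toFinset.mp hx) f

lemma lambda_not_pp {d : Ideal (𝓞 K)}
    (h : ¬ ∃ (𝔭 : Ideal (𝓞 K)) (k : ℕ), 𝔭.IsPrime ∧ 𝔭 ≠ ⊥ ∧ 0 < k ∧ d = 𝔭 ^ k) :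
    IdealLambda K d = 0 := if_neg h

lemma lambda_one : IdealLambda K 1 = 0 := by
  rw [IdealLambda, if_neg]
  rintro ⟨p, k, hp, -, hk, h⟩
  exact hp.ne_top (Ideal.isUnit_iff.mp ((isUnit_pow_iff hk.ne').mp (h ▸ isUnit_one)))

lemma lambda_pp {p : Ideal (𝓞 K)} (hp : p.IsPrime) (hp0 : p ≠ ⊥) {k : ℕ} (hk : 0 < k) :
    IdealLambda K (p ^ k) = Real.log (Ideal.absNorm p) := by
  rw [IdealLambda, if_pos ⟨p, k, hp, hp0, hk, rfl⟩, Ideal.radical_pow _ hk.ne', hp.radical]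

lemma mu_one : IdealMoebius K 1 = 1 := by
  rw [IdealMoebius, if_pos squarefree_one, UniqueFactorizationMonoid.factors_one]
  rfl

lemma sum_lambda (n : Ideal (𝓞 K)) (hn : n ≠ 0) (s : Finset (Ideal (𝓞 K)))
    (hs : ∀ d, d ∈ s ↔ d ∣ n) :
    ∑ d ∈ s, IdealLambda K d = Real.log (Ideal.absNorm n) := by
  revert hn s
  induction n using UniqueFactorizationMonoid.induction_on_coprime with
  | h0 => intro h; exact absurd rfl h
  | h1 hu =>
    rename_i u
    intro _ s hs
    have hu1 : u = 1 := by rw [Ideal.isUnit_iff.mp hu, Ideal.one_eq_top]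
    have hseq : s = {1} := by
      ext d
      rw [hs d, hu1, Finset.mem_singleton]
      constructor
      · intro h
        exact (Ideal.isUnit_iff.mp (isUnit_of_dvd_one h)).trans Ideal.one_eq_top.symm
      · rintro rfl; exact dvd_rfl
    rw [hseq, Finset.sum_singleton, lambda_one, hu1]
    simp
  | hpr i hp =>
    rename_i p
    intro hne s hs
    have hp0 : p ≠ 0 := hp.ne_zero
    have hpbot : p ≠ ⊥ := by rwa [← Ideal.zero_eq_bot]
    have hpP : p.IsPrime := (Ideal.prime_iff_isPrime hpbot).mp hp
    have hN2 : 2 ≤ Ideal.absNorm p := by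
      have h0 : Ideal.absNorm p ≠ 0 := fun h =>
        hpbot (Ideal.absNorm_eq_zero_iff.mp h)
      have h1 : Ideal.absNorm p ≠ 1 := fun h =>
        hp.not_unit (Ideal.isUnit_iff.mpr (Ideal.absNorm_eq_one_iff.mp h))
      omega
    have hseq : s = (Finset.range (i+1)).image (p ^ ·) := by
      ext d
      rw [hs d, Finset.mem_image]
      constructor
      · intro hd
        obtain ⟨j, hj, ha⟩ := (dvd_prime_pow hp i).mp hd
        exact ⟨j, Finset.mem_range.mpr (Nat.lt_succ_of_le hj), (associated_iff_eq.mp ha).symm⟩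
      · rintro ⟨j, hj, rfl⟩
        exact pow_dvd_pow p (Nat.lt_succ_iff.mp (Finset.mem_range.mp hj))
    rw [hseq, Finset.sum_image (fun a _ b _ h => Nat.pow_right_injective hN2
          (by simpa only [map_pow] using congrArg Ideal.absNorm h)),
        Finset.sum_range_succ']
    simp only [pow_zero, lambda_one, add_zero]
    rw [Finset.sum_congr rfl (fun j _ => lambda_pp hpP hpbot (Nat.succ_pos j)),
        Finset.sum_const, Finset.card_range, map_pow, Nat.cast_pow, Real.log_pow, nsmul_eq_mul]
  | hcp hcop hx hy =>
    rename_i x y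
    intro hxy0 s hs
    have hx0 : x ≠ 0 := fun h => hxy0 (by rw [h, zero_mul])
    have hy0 : y ≠ 0 := fun h => hxy0 (by rw [h, mul_zero])
    set PPc : Ideal (𝓞 K) → Prop :=
      fun d => ∃ (𝔭 : Ideal (𝓞 K)) (k : ℕ), 𝔭.IsPrime ∧ 𝔭 ≠ ⊥ ∧ 0 < k ∧ d = 𝔭 ^ k with hPPc
    have hzero : ∀ d, ¬ PPc d → IdealLambda K d = 0 := fun d h => if_neg h
    have hsplitpp : ∀ (t : Finset (Ideal (𝓞 K))),
        ∑ d ∈ t, IdealLambda K d = ∑ d ∈ t.filter PPc, IdealLambda K d :=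
      fun t => (Finset.sum_filter_of_ne (fun d _ hne => by_contra fun h => hne (hzero d h))).symm
    have hsx : ∀ d, d ∈ s.filter (· ∣ x) ↔ d ∣ x := by
      intro d; rw [Finset.mem_filter, hs d]
      exact ⟨fun h => h.2, fun h => ⟨dvd_mul_of_dvd_left h y, h⟩⟩
    have hsy : ∀ d, d ∈ s.filter (· ∣ y) ↔ d ∣ y := by
      intro d; rw [Finset.mem_filter, hs d]
      exact ⟨fun h => h.2, fun h => ⟨dvd_mul_of_dvd_right h x, h⟩⟩
    have hunion : s.filter PPc = (s.filter (· ∣ x)).filter PPc ∪ (s.filter (· ∣ y)).filter PPc := by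
      ext d
      simp only [Finset.mem_union, Finset.mem_filter]
      constructor
      · rintro ⟨hd, hpp⟩
        obtain ⟨p, k, hpP, hpbot, hk, rfl⟩ := hpp
        have hprime : Prime p := (Ideal.prime_iff_isPrime hpbot).mpr hpP
        have hdvd : p ^ k ∣ x * y := (hs _).mp hd
        have hpxy : p ∣ x * y := (dvd_pow_self p hk.ne').trans hdvd
        rcases hprime.dvd_mul.mp hpxy with hpx | hpy
        · have hpy' : ¬ p ∣ y := fun h => hprime.not_unit (hcop hpx h)
          exact Or.inl ⟨⟨hd, hprime.pow_dvd_of_dvd_mul_right _ hpy' hdvd⟩, p, k, hpP, hpbot, hk, rfl⟩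
        · have hpx' : ¬ p ∣ x := fun h => hprime.not_unit (hcop h hpy)
          exact Or.inr ⟨⟨hd, hprime.pow_dvd_of_dvd_mul_left _ hpx' hdvd⟩, p, k, hpP, hpbot, hk, rfl⟩
      · rintro (⟨⟨hd, -⟩, hpp⟩ | ⟨⟨hd, -⟩, hpp⟩) <;> exact ⟨hd, hpp⟩
    have hdisj : Disjoint ((s.filter (· ∣ x)).filter PPc) ((s.filter (· ∣ y)).filter PPc) := by
      rw [Finset.disjoint_left]
      intro d hdx hdy
      obtain ⟨h1, hpp⟩ := Finset.mem_filter.mp hdx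
      obtain ⟨-, hdvx⟩ := Finset.mem_filter.mp h1
      obtain ⟨h2, -⟩ := Finset.mem_filter.mp hdy
      obtain ⟨-, hdvy⟩ := Finset.mem_filter.mp h2
      obtain ⟨p, k, hpP, hpbot, hk, rfl⟩ := hpp
      exact ((Ideal.prime_iff_isPrime hpbot).mpr hpP).not_unit
        (hcop ((dvd_pow_self p hk.ne').trans hdvx) ((dvd_pow_self p hk.ne').trans hdvy))
    have hNx : (Ideal.absNorm x : ℝ) ≠ 0 := Nat.cast_ne_zero.mpr fun h =>
      hx0 (by rw [Ideal.zero_eq_bot]; exact Ideal.absNorm_eq_zero_iff.mp h)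
    have hNy : (Ideal.absNorm y : ℝ) ≠ 0 := Nat.cast_ne_zero.mpr fun h =>
      hy0 (by rw [Ideal.zero_eq_bot]; exact Ideal.absNorm_eq_zero_iff.mp h)
    calc ∑ d ∈ s, IdealLambda K d
        = ∑ d ∈ s.filter PPc, IdealLambda K d := hsplitpp s
      _ = ∑ d ∈ (s.filter (· ∣ x)).filter PPc, IdealLambda K d
          + ∑ d ∈ (s.filter (· ∣ y)).filter PPc, IdealLambda K d := by
          rw [hunion, Finset.sum_union hdisj]
      _ = ∑ d ∈ s.filter (· ∣ x), IdealLambda K d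
          + ∑ d ∈ s.filter (· ∣ y), IdealLambda K d := by
          rw [← hsplitpp, ← hsplitpp]
      _ = Real.log (Ideal.absNorm x) + Real.log (Ideal.absNorm y) := by
          rw [hx hx0 _ hsx, hy hy0 _ hsy]
      _ = Real.log (Ideal.absNorm (x * y)) := by
          rw [show Ideal.absNorm (x * y) = Ideal.absNorm x * Ideal.absNorm y from
            _root_.map_mul Ideal.absNorm x y, Nat.cast_mul, Real.log_mul hNx hNy]


lemma finite_pairs (n : Ideal (𝓞 K)) (hn : n ≠ 0) :
    {q : Ideal (𝓞 K) × Ideal (𝓞 K) | q.1 * q.2 = n}.Finite := by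
  apply Set.Finite.subset ((finite_div n hn).prod (finite_div n hn))
  rintro ⟨a, b⟩ h
  have h' : a * b = n := h
  exact ⟨⟨b, h'.symm⟩, ⟨a, by rw [← h', mul_comm]⟩⟩

lemma finite_triples (n : Ideal (𝓞 K)) (hn : n ≠ 0) :
    {t : Ideal (𝓞 K) × Ideal (𝓞 K) × Ideal (𝓞 K) | t.1 * t.2.1 * t.2.2 = n}.Finite := by
  apply Set.Finite.subset ((finite_div n hn).prod ((finite_div n hn).prod (finite_div n hn)))
  rintro ⟨a, b, c⟩ h
  have h' : a * b * c = n := h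
  exact ⟨⟨b * c, by rw [← h']; ring⟩, ⟨a * c, by rw [← h']; ring⟩, ⟨a * b, by rw [← h']; ring⟩⟩

def divFin (r : Ideal (𝓞 K)) : Finset (Ideal (𝓞 K)) :=
  if h : r = 0 then ∅ else (finite_div r h).toFinset

lemma mem_divFin {r d : Ideal (𝓞 K)} (hr : r ≠ 0) : d ∈ divFin r ↔ d ∣ r := by
  rw [divFin, dif_neg hr, Set.Finite.mem_toFinset]
  exact Iff.rfl

def pairsFin (r : Ideal (𝓞 K)) : Finset (Ideal (𝓞 K) × Ideal (𝓞 K)) :=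
  if h : r = 0 then ∅ else (finite_pairs r h).toFinset

lemma mem_pairsFin {r : Ideal (𝓞 K)} {q : Ideal (𝓞 K) × Ideal (𝓞 K)} (hr : r ≠ 0) :
    q ∈ pairsFin r ↔ q.1 * q.2 = r := by
  rw [pairsFin, dif_neg hr, Set.Finite.mem_toFinset]
  exact Iff.rfl

def triplesFin (r : Ideal (𝓞 K)) : Finset (Ideal (𝓞 K) × Ideal (𝓞 K) × Ideal (𝓞 K)) :=
  if h : r = 0 then ∅ else (finite_triples r h).toFinset

lemma mem_triplesFin {r : Ideal (𝓞 K)} {t : Ideal (𝓞 K) × Ideal (𝓞 K) × Ideal (𝓞 K)}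
    (hr : r ≠ 0) : t ∈ triplesFin r ↔ t.1 * t.2.1 * t.2.2 = r := by
  rw [triplesFin, dif_neg hr, Set.Finite.mem_toFinset]
  exact Iff.rfl

lemma sum_pairs_fst (r : Ideal (𝓞 K)) (hr : r ≠ 0) (f : Ideal (𝓞 K) → ℝ) :
    ∑ q ∈ pairsFin r, f q.1 = ∑ d ∈ divFin r, f d := by
  apply Finset.sum_nbij' (i := fun q => q.1)
    (j := fun d => (d, if h : d ∣ r then h.choose else 0))
  · intro q hq
    rw [mem_divFin hr]
    exact ⟨q.2, ((mem_pairsFin hr).mp hq).symm⟩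
  · intro d hd
    have hdvd : d ∣ r := (mem_divFin hr).mp hd
    rw [mem_pairsFin hr]
    simp only [dif_pos hdvd]
    exact hdvd.choose_spec.symm
  · intro q hq
    have hq' : q.1 * q.2 = r := (mem_pairsFin hr).mp hq
    have hdvd : q.1 ∣ r := ⟨q.2, hq'.symm⟩
    have hq10 : q.1 ≠ 0 := fun h => hr (by rw [← hq', h, zero_mul])
    simp only [dif_pos hdvd]
    have : q.1 * hdvd.choose = q.1 * q.2 := by rw [← hdvd.choose_spec, hq']
    rw [Prod.ext_iff]
    exact ⟨rfl, mul_left_cancel₀ hq10 this⟩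
  · intro d hd
    rfl
  · intro q hq
    rfl

lemma triple_expand (n : Ideal (𝓞 K)) (hn : n ≠ 0)
    (F : Ideal (𝓞 K) × Ideal (𝓞 K) × Ideal (𝓞 K) → ℝ) :
    ∑ t ∈ triplesFin n, F t = ∑ p ∈ pairsFin n, ∑ q ∈ pairsFin p.2, F (p.1, q.1, q.2) := by
  have hmaps : ∀ t ∈ triplesFin n, (t.1, t.2.1 * t.2.2) ∈ pairsFin n := by
    intro t ht
    rw [mem_pairsFin hn]
    have := (mem_triplesFin hn).mp ht
    dsimp only
    rw [← mul_assoc]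
    exact this
  rw [← Finset.sum_fiberwise_of_maps_to hmaps F]
  apply Finset.sum_congr rfl
  intro p hp
  have hp2 : p.1 * p.2 = n := (mem_pairsFin hn).mp hp
  have hp20 : p.2 ≠ 0 := fun h => hn (by rw [← hp2, h, mul_zero])
  apply Finset.sum_nbij' (i := fun t => (t.2.1, t.2.2)) (j := fun q => (p.1, q.1, q.2))
  · intro t ht
    obtain ⟨-, hteq⟩ := Finset.mem_filter.mp ht
    rw [mem_pairsFin hp20]
    exact congrArg Prod.snd hteq
  · intro q hq
    have hq' : q.1 * q.2 = p.2 := (mem_pairsFin hp20).mp hq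
    refine Finset.mem_filter.mpr ⟨?_, ?_⟩
    · rw [mem_triplesFin hn]
      dsimp only
      rw [mul_assoc, hq', hp2]
    · dsimp only
      rw [hq']
  · intro t ht
    obtain ⟨-, hteq⟩ := Finset.mem_filter.mp ht
    have h1 : t.1 = p.1 := congrArg Prod.fst hteq
    rw [← h1]
  · intro q hq
    rfl
  · intro t ht
    obtain ⟨-, hteq⟩ := Finset.mem_filter.mp ht
    have h1 : t.1 = p.1 := congrArg Prod.fst hteq
    rw [← h1]


lemma inner_mu (r : Ideal (𝓞 K)) (hr : r ≠ 0) (V : ℝ) :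
    (∑' d : {d : Ideal (𝓞 K) // d ∣ r ∧ (Ideal.absNorm d : ℝ) ≤ V}, (IdealMoebius K d : ℝ))
      = ∑ d ∈ divFin r,
          if (Ideal.absNorm d : ℝ) ≤ V then (IdealMoebius K d : ℝ) else 0 := by
  have hfin : {d : Ideal (𝓞 K) | d ∣ r ∧ (Ideal.absNorm d : ℝ) ≤ V}.Finite :=
    (finite_div r hr).subset fun d hd => hd.1
  have e : (∑' d : {d : Ideal (𝓞 K) // d ∣ r ∧ (Ideal.absNorm d : ℝ) ≤ V},
      (IdealMoebius K d : ℝ)) = ∑ d ∈ hfin.toFinset, (IdealMoebius K d : ℝ) :=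
    tsum_finset hfin (fun d => (IdealMoebius K d : ℝ))
  rw [e, ← Finset.sum_filter]
  congr 1
  ext d
  simp only [Set.Finite.mem_toFinset, Set.mem_setOf_eq, Finset.mem_filter, mem_divFin hr]

end Vaughan

open Vaughan in
set_option maxHeartbeats 2000000 in
/-- (Vaughan's identity for number fields.) -/
theorem statement5
    (K : Type) [Field K] [NumberField K]
    (𝔫 : Ideal (𝓞 K)) (h𝔫 : 𝔫 ≠ ⊥)
    (U V : ℝ) (hU : 1 ≤ U) (hV : 1 ≤ V) (hUn : U < (Ideal.absNorm 𝔫 : ℝ)) :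
    IdealLambda K 𝔫 =
      -- a₁(𝔫)
      (-∑' t : {t : Ideal (𝓞 K) × Ideal (𝓞 K) × Ideal (𝓞 K) //
          t.1 * t.2.1 * t.2.2 = 𝔫 ∧ (Ideal.absNorm t.2.1 : ℝ) ≤ V ∧
          (Ideal.absNorm t.2.2 : ℝ) ≤ U},
        (IdealMoebius K t.1.2.1 : ℝ) * IdealLambda K t.1.2.2)
      -- a₂(𝔫)
      + (∑' p : {p : Ideal (𝓞 K) × Ideal (𝓞 K) //
          p.1 * p.2 = 𝔫 ∧ (Ideal.absNorm p.1 : ℝ) ≤ V},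
        (IdealMoebius K p.1.1 : ℝ) * Real.log (Ideal.absNorm p.1.2))
      -- a₃(𝔫)
      + (-∑' p : {p : Ideal (𝓞 K) × Ideal (𝓞 K) //
          p.1 * p.2 = 𝔫 ∧ U < (Ideal.absNorm p.1 : ℝ) ∧ 1 < Ideal.absNorm p.2},
        IdealLambda K p.1.1 *
          ∑' 𝔡 : {𝔡 : Ideal (𝓞 K) // 𝔡 ∣ p.1.2 ∧ (Ideal.absNorm 𝔡 : ℝ) ≤ V},
            (IdealMoebius K 𝔡 : ℝ)) := by
  have hn0 : 𝔫 ≠ 0 := by rwa [Ideal.zero_eq_bot]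
  have hfin1 : {t : Ideal (𝓞 K) × Ideal (𝓞 K) × Ideal (𝓞 K) |
      t.1 * t.2.1 * t.2.2 = 𝔫 ∧ (Ideal.absNorm t.2.1 : ℝ) ≤ V ∧
      (Ideal.absNorm t.2.2 : ℝ) ≤ U}.Finite :=
    (finite_triples 𝔫 hn0).subset fun t ht => ht.1
  have hfin2 : {p : Ideal (𝓞 K) × Ideal (𝓞 K) |
      p.1 * p.2 = 𝔫 ∧ (Ideal.absNorm p.1 : ℝ) ≤ V}.Finite :=
    (finite_pairs 𝔫 hn0).subset fun p hp => hp.1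
  have hfin3 : {p : Ideal (𝓞 K) × Ideal (𝓞 K) |
      p.1 * p.2 = 𝔫 ∧ U < (Ideal.absNorm p.1 : ℝ) ∧ 1 < Ideal.absNorm p.2}.Finite :=
    (finite_pairs 𝔫 hn0).subset fun p hp => hp.1
  have hT1 : hfin1.toFinset = (triplesFin 𝔫).filter
      (fun t => (Ideal.absNorm t.2.1 : ℝ) ≤ V ∧ (Ideal.absNorm t.2.2 : ℝ) ≤ U) := by
    ext t
    simp only [Set.Finite.mem_toFinset, Set.mem_setOf_eq, Finset.mem_filter,
      mem_triplesFin hn0]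
  have hT2 : hfin2.toFinset = (pairsFin 𝔫).filter
      (fun p => (Ideal.absNorm p.1 : ℝ) ≤ V) := by
    ext p
    simp only [Set.Finite.mem_toFinset, Set.mem_setOf_eq, Finset.mem_filter,
      mem_pairsFin hn0]
  have hT3 : hfin3.toFinset = (pairsFin 𝔫).filter
      (fun p => U < (Ideal.absNorm p.1 : ℝ) ∧ 1 < Ideal.absNorm p.2) := by
    ext p
    simp only [Set.Finite.mem_toFinset, Set.mem_setOf_eq, Finset.mem_filter,
      mem_pairsFin hn0]
  -- a₁
  have e1 : (∑' t : {t : Ideal (𝓞 K) × Ideal (𝓞 K) × Ideal (𝓞 K) //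
        t.1 * t.2.1 * t.2.2 = 𝔫 ∧ (Ideal.absNorm t.2.1 : ℝ) ≤ V ∧
        (Ideal.absNorm t.2.2 : ℝ) ≤ U},
      (IdealMoebius K t.1.2.1 : ℝ) * IdealLambda K t.1.2.2)
      = ∑ t ∈ triplesFin 𝔫,
          if (Ideal.absNorm t.1 : ℝ) ≤ V then
            (if (Ideal.absNorm t.2.1 : ℝ) ≤ U then
              (IdealMoebius K t.1 : ℝ) * IdealLambda K t.2.1 else 0)
          else 0 := by
    refine (tsum_finset hfin1
      (fun t => (IdealMoebius K t.2.1 : ℝ) * IdealLambda K t.2.2)).trans ?_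
    rw [hT1, Finset.sum_filter]
    refine Finset.sum_nbij' (i := fun t => (t.2.1, t.2.2, t.1))
      (j := fun t => (t.2.2, t.1, t.2.1)) ?_ ?_ ?_ ?_ ?_
    · intro t ht
      rw [mem_triplesFin hn0] at ht ⊢
      rw [← ht]; ring
    · intro t ht
      rw [mem_triplesFin hn0] at ht ⊢
      rw [← ht]; ring
    · intro t _; rfl
    · intro t _; rfl
    · intro t _
      by_cases h1 : (Ideal.absNorm t.2.1 : ℝ) ≤ V <;>
        by_cases h2 : (Ideal.absNorm t.2.2 : ℝ) ≤ U <;>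
        simp [h1, h2]
  -- a₂
  have e2 : (∑' p : {p : Ideal (𝓞 K) × Ideal (𝓞 K) //
        p.1 * p.2 = 𝔫 ∧ (Ideal.absNorm p.1 : ℝ) ≤ V},
      (IdealMoebius K p.1.1 : ℝ) * Real.log (Ideal.absNorm p.1.2))
      = ∑ t ∈ triplesFin 𝔫,
          if (Ideal.absNorm t.1 : ℝ) ≤ V then
            (IdealMoebius K t.1 : ℝ) * IdealLambda K t.2.1 else 0 := by
    refine (tsum_finset hfin2
      (fun p => (IdealMoebius K p.1 : ℝ) * Real.log (Ideal.absNorm p.2))).trans ?_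
    rw [hT2, Finset.sum_filter,
      triple_expand 𝔫 hn0 (fun t =>
        if (Ideal.absNorm t.1 : ℝ) ≤ V then
          (IdealMoebius K t.1 : ℝ) * IdealLambda K t.2.1 else 0)]
    refine Finset.sum_congr rfl fun p hp => ?_
    have hp2 : p.1 * p.2 = 𝔫 := (mem_pairsFin hn0).mp hp
    have hp20 : p.2 ≠ 0 := fun h => hn0 (by rw [← hp2, h, mul_zero])
    have hLog : Real.log (Ideal.absNorm p.2) = ∑ q ∈ pairsFin p.2, IdealLambda K q.1 := by
      rw [sum_pairs_fst p.2 hp20 (fun d => IdealLambda K d)]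
      exact (sum_lambda p.2 hp20 _ (fun d => mem_divFin hp20)).symm
    dsimp only
    split_ifs with h
    · rw [hLog, Finset.mul_sum]
    · simp
  -- a₃
  have e3 : (∑' p : {p : Ideal (𝓞 K) × Ideal (𝓞 K) //
        p.1 * p.2 = 𝔫 ∧ U < (Ideal.absNorm p.1 : ℝ) ∧ 1 < Ideal.absNorm p.2},
      IdealLambda K p.1.1 *
        ∑' 𝔡 : {𝔡 : Ideal (𝓞 K) // 𝔡 ∣ p.1.2 ∧ (Ideal.absNorm 𝔡 : ℝ) ≤ V},
          (IdealMoebius K 𝔡 : ℝ))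
      = ∑ t ∈ triplesFin 𝔫,
          if (Ideal.absNorm t.1 : ℝ) ≤ V then
            (if U < (Ideal.absNorm t.2.1 : ℝ) ∧ 1 < Ideal.absNorm (t.1 * t.2.2) then
              (IdealMoebius K t.1 : ℝ) * IdealLambda K t.2.1 else 0)
          else 0 := by
    refine (tsum_finset hfin3
      (fun p => IdealLambda K p.1 *
        ∑' 𝔡 : {𝔡 : Ideal (𝓞 K) // 𝔡 ∣ p.2 ∧ (Ideal.absNorm 𝔡 : ℝ) ≤ V},
          (IdealMoebius K 𝔡 : ℝ))).trans ?_
    rw [hT3, Finset.sum_filter]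
    trans (∑ t ∈ triplesFin 𝔫,
      if U < (Ideal.absNorm t.1 : ℝ) ∧ 1 < Ideal.absNorm (t.2.1 * t.2.2) then
        (if (Ideal.absNorm t.2.1 : ℝ) ≤ V then
          IdealLambda K t.1 * (IdealMoebius K t.2.1 : ℝ) else 0)
      else 0)
    · rw [triple_expand 𝔫 hn0 (fun t =>
        if U < (Ideal.absNorm t.1 : ℝ) ∧ 1 < Ideal.absNorm (t.2.1 * t.2.2) then
          (if (Ideal.absNorm t.2.1 : ℝ) ≤ V then
            IdealLambda K t.1 * (IdealMoebius K t.2.1 : ℝ) else 0)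
        else 0)]
      refine Finset.sum_congr rfl fun p hp => ?_
      have hp2 : p.1 * p.2 = 𝔫 := (mem_pairsFin hn0).mp hp
      have hp20 : p.2 ≠ 0 := fun h => hn0 (by rw [← hp2, h, mul_zero])
      dsimp only
      rw [Finset.sum_congr rfl (fun q hq => by
        rw [(mem_pairsFin hp20).mp hq] :
          ∀ q ∈ pairsFin p.2,
            (if U < (Ideal.absNorm p.1 : ℝ) ∧ 1 < Ideal.absNorm (q.1 * q.2) then
              (if (Ideal.absNorm q.1 : ℝ) ≤ V then
                IdealLambda K p.1 * (IdealMoebius K q.1 : ℝ) else 0)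
            else 0)
            = (if U < (Ideal.absNorm p.1 : ℝ) ∧ 1 < Ideal.absNorm p.2 then
                (if (Ideal.absNorm q.1 : ℝ) ≤ V then
                  IdealLambda K p.1 * (IdealMoebius K q.1 : ℝ) else 0)
              else 0))]
      split_ifs with h
      · rw [inner_mu p.2 hp20 V, Finset.mul_sum,
          sum_pairs_fst p.2 hp20 (fun d =>
            if (Ideal.absNorm d : ℝ) ≤ V then
              IdealLambda K p.1 * (IdealMoebius K d : ℝ) else 0)]
        exact Finset.sum_congr rfl fun q _ => by
          split_ifs with h' <;> simp
      · simp
    · refine Finset.sum_nbij' (i := fun t => (t.2.1, t.1, t.2.2))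
        (j := fun t => (t.2.1, t.1, t.2.2)) ?_ ?_ ?_ ?_ ?_
      · intro t ht
        rw [mem_triplesFin hn0] at ht ⊢
        rw [← ht]; ring
      · intro t ht
        rw [mem_triplesFin hn0] at ht ⊢
        rw [← ht]; ring
      · intro t _; rfl
      · intro t _; rfl
      · intro t _
        by_cases h1 : U < (Ideal.absNorm t.1 : ℝ) ∧ 1 < Ideal.absNorm (t.2.1 * t.2.2) <;>
          by_cases h2 : (Ideal.absNorm t.2.1 : ℝ) ≤ V <;>
          simp [h1, h2, mul_comm]
  rw [e1, e2, e3]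
  -- pointwise splitting
  have hsplit : ∀ t ∈ triplesFin 𝔫,
      (if (Ideal.absNorm t.1 : ℝ) ≤ V then
          (IdealMoebius K t.1 : ℝ) * IdealLambda K t.2.1 else 0)
      = (if (Ideal.absNorm t.1 : ℝ) ≤ V then
            (if (Ideal.absNorm t.2.1 : ℝ) ≤ U then
              (IdealMoebius K t.1 : ℝ) * IdealLambda K t.2.1 else 0)
          else 0)
        + ((if (Ideal.absNorm t.1 : ℝ) ≤ V then
            (if U < (Ideal.absNorm t.2.1 : ℝ) ∧ 1 < Ideal.absNorm (t.1 * t.2.2) then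
              (IdealMoebius K t.1 : ℝ) * IdealLambda K t.2.1 else 0)
          else 0)
        + (if (Ideal.absNorm t.1 : ℝ) ≤ V ∧ U < (Ideal.absNorm t.2.1 : ℝ) ∧
              ¬ 1 < Ideal.absNorm (t.1 * t.2.2) then
            (IdealMoebius K t.1 : ℝ) * IdealLambda K t.2.1 else 0)) := by
    intro t _
    by_cases h2 : (Ideal.absNorm t.2.1 : ℝ) ≤ U
    · have h2' : ¬ U < (Ideal.absNorm t.2.1 : ℝ) := not_lt.mpr h2
      by_cases h1 : (Ideal.absNorm t.1 : ℝ) ≤ V <;>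
        simp only [h1, h2, h2', if_true, if_false, and_true, true_and, and_false,
          false_and, not_true, not_false_iff, add_zero, zero_add, ite_true, ite_false,
          ite_self] <;> ring
    · have h2' : U < (Ideal.absNorm t.2.1 : ℝ) := not_le.mp h2
      by_cases h1 : (Ideal.absNorm t.1 : ℝ) ≤ V <;>
        by_cases h3 : 1 < Ideal.absNorm (t.1 * t.2.2) <;>
        simp only [h1, h2, h2', h3, if_true, if_false, and_true, true_and, and_false,
          false_and, not_true, not_false_iff, add_zero, zero_add, ite_true, ite_false,
          ite_self] <;> ring
  have hsum2 : (∑ t ∈ triplesFin 𝔫,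
        if (Ideal.absNorm t.1 : ℝ) ≤ V then
          (IdealMoebius K t.1 : ℝ) * IdealLambda K t.2.1 else 0)
      = (∑ t ∈ triplesFin 𝔫,
          if (Ideal.absNorm t.1 : ℝ) ≤ V then
            (if (Ideal.absNorm t.2.1 : ℝ) ≤ U then
              (IdealMoebius K t.1 : ℝ) * IdealLambda K t.2.1 else 0)
          else 0)
        + ((∑ t ∈ triplesFin 𝔫,
            if (Ideal.absNorm t.1 : ℝ) ≤ V then
              (if U < (Ideal.absNorm t.2.1 : ℝ) ∧ 1 < Ideal.absNorm (t.1 * t.2.2) then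
                (IdealMoebius K t.1 : ℝ) * IdealLambda K t.2.1 else 0)
            else 0)
        + (∑ t ∈ triplesFin 𝔫,
            if (Ideal.absNorm t.1 : ℝ) ≤ V ∧ U < (Ideal.absNorm t.2.1 : ℝ) ∧
                ¬ 1 < Ideal.absNorm (t.1 * t.2.2) then
              (IdealMoebius K t.1 : ℝ) * IdealLambda K t.2.1 else 0)) := by
    rw [← Finset.sum_add_distrib, ← Finset.sum_add_distrib]
    exact Finset.sum_congr rfl hsplit
  have hsingle : (triplesFin 𝔫).filter
      (fun t => (Ideal.absNorm t.1 : ℝ) ≤ V ∧ U < (Ideal.absNorm t.2.1 : ℝ) ∧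
        ¬ 1 < Ideal.absNorm (t.1 * t.2.2))
      = {((1 : Ideal (𝓞 K)), 𝔫, (1 : Ideal (𝓞 K)))} := by
    ext t
    rw [Finset.mem_filter, Finset.mem_singleton, mem_triplesFin hn0]
    constructor
    · rintro ⟨hprod, -, -, hc⟩
      have h10 : t.1 ≠ 0 := fun h => hn0 (by rw [← hprod, h, zero_mul, zero_mul])
      have h30 : t.2.2 ≠ 0 := fun h => hn0 (by rw [← hprod, h, mul_zero])
      have hac0 : t.1 * t.2.2 ≠ 0 := mul_ne_zero h10 h30
      have hNne : Ideal.absNorm (t.1 * t.2.2) ≠ 0 := fun h =>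
        hac0 (by rw [Ideal.zero_eq_bot]; exact Ideal.absNorm_eq_zero_iff.mp h)
      have hNac : Ideal.absNorm (t.1 * t.2.2) = 1 := by omega
      have hac : t.1 * t.2.2 = 1 := by
        rw [Ideal.one_eq_top]
        exact Ideal.absNorm_eq_one_iff.mp hNac
      have h1 : t.1 = 1 := by
        rw [Ideal.isUnit_iff.mp (IsUnit.of_mul_eq_one _ hac), Ideal.one_eq_top]
      have h3 : t.2.2 = 1 := by
        rw [Ideal.isUnit_iff.mp (IsUnit.of_mul_eq_one _ (show t.2.2 * t.1 = 1 by rwa [mul_comm] at hac)),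
          Ideal.one_eq_top]
      have h2 : t.2.1 = 𝔫 := by
        rw [h1, h3] at hprod
        simpa using hprod
      calc t = (t.1, t.2.1, t.2.2) := rfl
        _ = (1, 𝔫, 1) := by rw [h1, h2, h3]
    · rintro rfl
      refine ⟨by simp, ?_, ?_, by simp [Ideal.one_eq_top, Ideal.absNorm_top]⟩
      · simp only [Ideal.one_eq_top, Ideal.absNorm_top, Nat.cast_one]
        exact hV
      · simpa using hUn
  have hE : (∑ t ∈ triplesFin 𝔫,
      if (Ideal.absNorm t.1 : ℝ) ≤ V ∧ U < (Ideal.absNorm t.2.1 : ℝ) ∧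
          ¬ 1 < Ideal.absNorm (t.1 * t.2.2) then
        (IdealMoebius K t.1 : ℝ) * IdealLambda K t.2.1 else 0)
      = IdealLambda K 𝔫 := by
    rw [← Finset.sum_filter, hsingle, Finset.sum_singleton]
    have hmu : IdealMoebius K (⊤ : Ideal (𝓞 K)) = 1 := by
      rw [← Ideal.one_eq_top]; exact mu_one
    simp [hmu]
  linarith [hsum2, hE]


end
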